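/- Suppose R0 > 1. Then the triple E* = (S*, Im*, Is*) with S* = (μ+β+ρ)/σm, Im* = μ(R0−1)/σm, Is* = μβ(R0−1)/(σm(μ+r)) satisfies S* > 0, Im* > 0, Is* > 0 and the sub-capacity equilibrium equations A − σm·S*·Im* − μ·S* = 0, σm·S*·Im* − (μ+β+ρ)·Im* = 0, β·Im* − (μ+r)·Is* = 0; it is the unique solution of these equations with S > 0 and Im > 0; and it satisfies Is* ≤ C_I if and only if R0 ≤ 1 + σm(μ+r)C_I/(μβ). -/

import Mathlib

/-- For `R0 > 1`, the sub-capacity endemic equilibrium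
`E* = (S*, Im*, Is*)` is positive, satisfies the sub-capacity equilibrium
equations, is the unique such solution with `S > 0`, `Im > 0`, and satisfies
`Is* ≤ C_I ↔ R0 ≤ 1 + σm(μ+r)C_I/(μβ)`. -/
theorem stmt0 (A μ ρ r β σm σs CI : ℝ)
    (hA : 0 < A) (hμ : 0 < μ) (hρ : 0 < ρ) (hr : 0 < r) (hβ : 0 < β)
    (hσm : 0 < σm) (hσs : 0 < σs) (hCI : 0 < CI)
    (R0 : ℝ) (hR0 : R0 = A * σm / (μ * (μ + β + ρ)))
    (hR0gt : 1 < R0)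
    (Sstar Imstar Isstar : ℝ)
    (hS : Sstar = (μ + β + ρ) / σm)
    (hIm : Imstar = μ * (R0 - 1) / σm)
    (hIs : Isstar = μ * β * (R0 - 1) / (σm * (μ + r))) :
    0 < Sstar ∧ 0 < Imstar ∧ 0 < Isstar ∧
    A - σm * Sstar * Imstar - μ * Sstar = 0 ∧
    σm * Sstar * Imstar - (μ + β + ρ) * Imstar = 0 ∧
    β * Imstar - (μ + r) * Isstar = 0 ∧
    (∀ S Im Is : ℝ, 0 < S → 0 < Im →
      A - σm * S * Im - μ * S = 0 →
      σm * S * Im - (μ + β + ρ) * Im = 0 →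
      β * Im - (μ + r) * Is = 0 →
      S = Sstar ∧ Im = Imstar ∧ Is = Isstar) ∧
    (Isstar ≤ CI ↔ R0 ≤ 1 + σm * (μ + r) * CI / (μ * β)) := by
  have hD : 0 < μ + β + ρ := by linarith
  have hμr : 0 < μ + r := by linarith
  have hR1 : 0 < R0 - 1 := by linarith
  have hDne : (μ + β + ρ) ≠ 0 := ne_of_gt hD
  have hσne : σm ≠ 0 := ne_of_gt hσm
  have hμrne : (μ + r) ≠ 0 := ne_of_gt hμr
  have hSpos : 0 < Sstar := by rw [hS]; positivity
  have hImpos : 0 < Imstar := by rw [hIm]; positivity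
  have hIspos : 0 < Isstar := by rw [hIs]; positivity
  refine ⟨hSpos, hImpos, hIspos, ?_, ?_, ?_, ?_, ?_⟩
  · rw [hS, hIm, hR0]; field_simp; ring
  · rw [hS, hIm]; field_simp; ring
  · rw [hIm, hIs]; field_simp; ring
  · intro S Im Is hSp hImp h1 h2 h3
    have hσS : σm * S = μ + β + ρ := by
      have hne : Im ≠ 0 := ne_of_gt hImp
      have := mul_right_cancel₀ hne (by linarith : σm * S * Im = (μ + β + ρ) * Im)
      linarith
    have hSeq : S = Sstar := by
      rw [hS]; field_simp; linarith
    have hIm1 : (μ + β + ρ) * Im = A - μ * S := by nlinarith [hσS]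
    have hImeq : Im = Imstar := by
      rw [hIm, hR0]
      field_simp
      linear_combination σm * hIm1 - μ * hσS
    refine ⟨hSeq, hImeq, ?_⟩
    rw [hIs]
    rw [hImeq, hIm] at h3
    field_simp at h3 ⊢
    linarith
  · rw [hIs, div_le_iff₀ (by positivity), ← sub_le_iff_le_add',
      le_div_iff₀ (by positivity : (0:ℝ) < μ * β)]
    constructor <;> intro h <;> nlinarith [h]
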